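/- Let V be a nonzero finite-dimensional complex vector space, let P be a nondegenerate symmetric bilinear form on V, and let A be a bilinear form on a finite-dimensional complex vector space W. Suppose the bilinear form P⊗A on V ⊗ W, determined by (P⊗A)(u⊗x, v⊗y) = P(u,v)·A(x,y), is skew-symmetric and nondegenerate. Then A is skew-symmetric and nondegenerate, and the dimension of W is even. -/

import Mathlib

open TensorProduct

/-- if `P` is a nondegenerate symmetric bilinear form on a nonzero
finite-dimensional complex vector space `V` and the tensor-product form `P ⊗ A`
on `V ⊗ W` is skew-symmetric and nondegenerate, then `A` is skew-symmetric and
nondegenerate and `dim W` is even. -/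
theorem tensor_skew_of_symm_factor
    (V W : Type*) [AddCommGroup V] [Module ℂ V] [FiniteDimensional ℂ V] [Nontrivial V]
    [AddCommGroup W] [Module ℂ W] [FiniteDimensional ℂ W]
    (P : V →ₗ[ℂ] V →ₗ[ℂ] ℂ) (A : W →ₗ[ℂ] W →ₗ[ℂ] ℂ)
    (hPsymm : ∀ u v : V, P u v = P v u)
    (hPnd : Function.Bijective P)
    (B : V ⊗[ℂ] W →ₗ[ℂ] V ⊗[ℂ] W →ₗ[ℂ] ℂ)
    (hB : ∀ (u v : V) (x y : W), B (u ⊗ₜ x) (v ⊗ₜ y) = P u v * A x y)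
    (hBskew : ∀ z w : V ⊗[ℂ] W, B z w = - B w z)
    (hBnd : Function.Bijective B) :
    (∀ x y : W, A x y = - A y x) ∧ Function.Bijective A ∧
      Even (Module.finrank ℂ W) := by
  -- find u, v with P u v ≠ 0
  obtain ⟨u, hu⟩ := exists_ne (0 : V)
  have hPu : P u ≠ 0 := by
    intro h
    exact hu (hPnd.injective (by simpa using h))
  obtain ⟨v, hv⟩ : ∃ v, P u v ≠ 0 := by
    by_contra h
    push_neg at h
    exact hPu (LinearMap.ext fun v => by simpa using h v)
  -- skewness of A
  have hAskew : ∀ x y : W, A x y = - A y x := by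
    intro x y
    have h1 : P u v * A x y = - (P v u * A y x) := by
      rw [← hB, ← hB, hBskew]
    rw [hPsymm v u, ← mul_neg] at h1
    exact mul_left_cancel₀ hv h1
  -- if A x = 0 then x = 0
  have hker : ∀ x : W, A x = 0 → x = 0 := by
    intro x hx
    have hBz : B (u ⊗ₜ x) = 0 := by
      apply LinearMap.ext
      intro z
      induction z using TensorProduct.induction_on with
      | zero => simp
      | tmul a b => simp [hB, hx]
      | add a b ha hb => simp [ha, hb]
    have h0 : u ⊗ₜ[ℂ] x = 0 := by
      apply hBnd.injective
      simpa using hBz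
    -- contract with the functional P v (which is nonzero at u)
    have hPvu : P v u ≠ 0 := by rw [← hPsymm]; exact hv
    let φ : V ⊗[ℂ] W →ₗ[ℂ] W := TensorProduct.lift
      { toFun := fun a => (P v a) • (LinearMap.id : W →ₗ[ℂ] W)
        map_add' := by intro a b; simp [add_smul]
        map_smul' := by intro c a; simp [smul_smul] }
    have : φ (u ⊗ₜ x) = (P v u) • x := by simp [φ]
    rw [h0, map_zero] at this
    rcases smul_eq_zero.mp this.symm with h | h
    · exact absurd h hPvu
    · exact h
  have hAinj : Function.Injective A := by
    rw [← LinearMap.ker_eq_bot]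
    exact LinearMap.ker_eq_bot'.mpr hker
  have hAbij : Function.Bijective A :=
    ⟨hAinj, (LinearMap.injective_iff_surjective_of_finrank_eq_finrank
      (Subspace.dual_finrank_eq (K := ℂ) (V := W)).symm).mp hAinj⟩
  refine ⟨hAskew, hAbij, ?_⟩
  -- evenness via determinant of the Gram matrix
  have hAnd : LinearMap.BilinForm.Nondegenerate (A : LinearMap.BilinForm ℂ W) := by
    refine ⟨fun x hx => ?_, fun x hx => ?_⟩
    · exact hker x (LinearMap.ext fun y => by simpa using hx y)
    · exact hker x (LinearMap.ext fun y => by simpa [hAskew x y] using hx y)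
  let b := Module.finBasis ℂ W
  set n := Module.finrank ℂ W
  set M := LinearMap.BilinForm.toMatrix b A with hM
  have hdet : M.det ≠ 0 := (LinearMap.BilinForm.nondegenerate_iff_det_ne_zero b).mp hAnd
  have hMt : M.transpose = -M := by
    ext i j
    rw [Matrix.transpose_apply, Matrix.neg_apply, hM, LinearMap.BilinForm.toMatrix_apply,
      LinearMap.BilinForm.toMatrix_apply, hAskew]
  have hdeteq : M.det = (-1 : ℂ) ^ n * M.det := by
    conv_lhs => rw [← Matrix.det_transpose, hMt, Matrix.det_neg]
    simp
  rcases Nat.even_or_odd n with he | ho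
  · exact he
  · exfalso
    rw [ho.neg_one_pow, neg_one_mul] at hdeteq
    have h2 : M.det + M.det = 0 := by linear_combination hdeteq
    exact hdet (add_self_eq_zero.mp h2)
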